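/- Let A, X be categories and T : A ⥤ Monad X a parametrized monad. Define T̂ : A × X ⥤ A × X on objects by (A, X) ↦ (A, T_A(X)) and on morphisms (f : A → B, g : X → Y) by (f, (T_f)_Y ∘ T_A(g)). Then T̂ carries a monad structure whose unit has components (𝟙_A, η^{T_A}_X) and whose multiplication has components (𝟙_A, μ^{T_A}_X); moreover the composite of T̂ with the first projection A × X ⥤ A equals the first projection, and the images under the first projection of the unit and the multiplication of T̂ are identity natural transformations. Conversely, every monad M on A × X satisfying these three conditions equals T̂ for a unique functor T : A ⥤ Monad X. -/

import Mathlib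

open CategoryTheory CategoryTheory.Limits

universe v₁ v₂ u₁ u₂

variable {A : Type u₁} [Category.{v₁} A] {X : Type u₂} [Category.{v₂} X]

theorem prod_eqToHom_fst {p q : A × X} (h : p = q) :
    (eqToHom h).1 = eqToHom (congrArg Prod.fst h) := by subst h; rfl

theorem prod_eqToHom_snd {p q : A × X} (h : p = q) :
    (eqToHom h).2 = eqToHom (congrArg Prod.snd h) := by subst h; rfl

section
variable (M : Monad (A × X)) (h : M.toFunctor ⋙ CategoryTheory.Prod.fst A X = CategoryTheory.Prod.fst A X)

/-- object-level equality -/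
def kk (p : A × X) : M.obj p = (p.1, (M.obj p).2) :=
  Prod.ext (Functor.congr_obj h p) rfl

theorem mfst {p q : A × X} (f : p ⟶ q) :
    (M.map f).1 = eqToHom (Functor.congr_obj h p) ≫ f.1 ≫ eqToHom (Functor.congr_obj h q).symm := by
  have := Functor.congr_hom h f
  simpa using this

/-- The underlying functor of the monad `T_a`. -/
def unhatF (a : A) : X ⥤ X where
  obj x := (M.obj (a, x)).2
  map {x y} g := (M.map (𝟙 a, g)).2
  map_id x := by
    dsimp only
    rw [show ((𝟙 a, 𝟙 x) : (a,x) ⟶ (a,x)) = 𝟙 (a,x) from rfl, M.map_id]; rfl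
  map_comp {x y z} g g' := by
    dsimp only
    have : M.map ((𝟙 a, g ≫ g') : ((a,x) : A × X) ⟶ (a,z))
        = M.map ((𝟙 a, g) : ((a,x) : A × X) ⟶ (a,y)) ≫ M.map ((𝟙 a, g') : ((a,y) : A × X) ⟶ (a,z)) := by
      rw [← M.map_comp]; congr 1; ext <;> simp
    exact congrArg Prod.snd this

/-- commutation lemma -/
theorem Lstar (a : A) {x y : X} (g : x ⟶ y) :
    ((𝟙 a, (M.map (𝟙 a, g)).2) : ((a, (M.obj (a,x)).2) : A × X) ⟶ (a, (M.obj (a,y)).2))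
      ≫ eqToHom (kk M h (a,y)).symm
    = eqToHom (kk M h (a,x)).symm ≫ M.map (𝟙 a, g) := by
  ext
  · simp [prod_eqToHom_fst, mfst M h]
  · simp [prod_eqToHom_snd]

theorem comp_fst' {p q r : A × X} (u : p ⟶ q) (v : q ⟶ r) : (u ≫ v).1 = u.1 ≫ v.1 := rfl
theorem comp_snd' {p q r : A × X} (u : p ⟶ q) (v : q ⟶ r) : (u ≫ v).2 = u.2 ≫ v.2 := rfl
theorem id_fst' (p : A × X) : (𝟙 p : p ⟶ p).1 = 𝟙 p.1 := rfl
theorem id_snd' (p : A × X) : (𝟙 p : p ⟶ p).2 = 𝟙 p.2 := rfl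

section
variable (hη : ∀ p : A × X, (M.η.app p).1 = eqToHom (Functor.congr_obj h p).symm)
variable (hμ : ∀ p : A × X, (M.μ.app p).1 = eqToHom (Functor.congr_obj h (M.obj p)))

/-- The monad `T_a` on `X`. -/
def unhatM (a : A) : Monad X where
  toFunctor := unhatF M a
  η :=
    { app := fun x => (M.η.app (a, x)).2
      naturality := fun x y g =>
        congrArg Prod.snd (M.η.naturality ((𝟙 a, g) : ((a,x) : A × X) ⟶ (a,y))) }
  μ :=
    { app := fun x => (M.map (eqToHom (kk M h (a,x)).symm) ≫ M.μ.app (a,x)).2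
      naturality := by
        intro x y g
        have full : M.map ((𝟙 a, (M.map ((𝟙 a, g) : ((a,x) : A × X) ⟶ (a,y))).2) :
              ((a, (M.obj (a,x)).2) : A × X) ⟶ (a, (M.obj (a,y)).2))
              ≫ (M.map (eqToHom (kk M h (a,y)).symm) ≫ M.μ.app (a,y))
            = (M.map (eqToHom (kk M h (a,x)).symm) ≫ M.μ.app (a,x))
              ≫ M.map ((𝟙 a, g) : ((a,x) : A × X) ⟶ (a,y)) := by
          rw [← Category.assoc, ← M.map_comp, Lstar M h a g, M.map_comp, Category.assoc,
            show M.map (M.map ((𝟙 a, g) : ((a,x) : A × X) ⟶ (a,y))) ≫ M.μ.app (a,y)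
              = M.μ.app (a,x) ≫ M.map (𝟙 a, g) from M.μ.naturality _, Category.assoc]
        exact congrArg Prod.snd full }
  left_unit := by
    intro x
    have full : M.η.app (a, (M.obj (a,x)).2)
          ≫ (M.map (eqToHom (kk M h (a,x)).symm) ≫ M.μ.app (a,x))
        = eqToHom (kk M h (a,x)).symm := by
      rw [← Category.assoc, ← M.η.naturality (eqToHom (kk M h (a,x)).symm), Category.assoc,
        M.left_unit]
      simp
    have := congrArg Prod.snd full
    simp [prod_eqToHom_snd] at this
    exact this
  right_unit := by
    intro x
    have key : ((𝟙 a, (M.η.app (a,x)).2) : ((a,x) : A × X) ⟶ (a, (M.obj (a,x)).2))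
          ≫ eqToHom (kk M h (a,x)).symm = M.η.app (a,x) := by
      ext
      · simp [comp_fst', prod_eqToHom_fst, hη]
      · simp [comp_snd', prod_eqToHom_snd]
    have full : M.map ((𝟙 a, (M.η.app (a,x)).2) : ((a,x) : A × X) ⟶ (a, (M.obj (a,x)).2))
          ≫ (M.map (eqToHom (kk M h (a,x)).symm) ≫ M.μ.app (a,x)) = 𝟙 (M.obj (a,x)) := by
      rw [← Category.assoc, ← M.map_comp, key, M.right_unit]; rfl
    exact congrArg Prod.snd full
  assoc := by
    intro x
    set μ2 := (M.map (eqToHom (kk M h (a,x)).symm) ≫ M.μ.app (a,x)).2 with hμ2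
    have key : ((𝟙 a, μ2) : ((a, (M.obj (a, (M.obj (a,x)).2)).2) : A × X) ⟶ (a, (M.obj (a,x)).2))
          ≫ eqToHom (kk M h (a,x)).symm
        = eqToHom (kk M h (a, (M.obj (a,x)).2)).symm
          ≫ M.map (eqToHom (kk M h (a,x)).symm) ≫ M.μ.app (a,x) := by
      ext
      · simp [comp_fst', prod_eqToHom_fst, hμ, mfst M h]
      · simp [hμ2, comp_snd', prod_eqToHom_snd]
    have full : M.map ((𝟙 a, μ2) :
            ((a, (M.obj (a, (M.obj (a,x)).2)).2) : A × X) ⟶ (a, (M.obj (a,x)).2))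
          ≫ (M.map (eqToHom (kk M h (a,x)).symm) ≫ M.μ.app (a,x))
        = (M.map (eqToHom (kk M h (a, (M.obj (a,x)).2)).symm) ≫ M.μ.app (a, (M.obj (a,x)).2))
          ≫ (M.map (eqToHom (kk M h (a,x)).symm) ≫ M.μ.app (a,x)) := by
      rw [← Category.assoc, ← M.map_comp, key, M.map_comp, M.map_comp]
      slice_lhs 3 4 => rw [M.assoc]
      slice_lhs 2 3 => rw [show M.map (M.map (eqToHom (kk M h (a,x)).symm)) ≫ M.μ.app (M.obj (a,x))
              = M.μ.app (a, (M.obj (a,x)).2) ≫ M.map (eqToHom (kk M h (a,x)).symm) from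
            M.μ.naturality _]
      simp
    exact congrArg Prod.snd full

/-- The parametrized monad extracted from `M`. -/
def unhat : A ⥤ Monad X where
  obj a := unhatM M h hη hμ a
  map {a b} f :=
    { app := fun x => (M.map ((f, 𝟙 x) : ((a,x) : A × X) ⟶ (b,x))).2
      naturality := by
        intro x y g
        have full : M.map ((𝟙 a, g) : ((a,x) : A × X) ⟶ (a,y))
              ≫ M.map ((f, 𝟙 y) : ((a,y) : A × X) ⟶ (b,y))
            = M.map ((f, 𝟙 x) : ((a,x) : A × X) ⟶ (b,x))
              ≫ M.map ((𝟙 b, g) : ((b,x) : A × X) ⟶ (b,y)) := by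
          rw [← M.map_comp, ← M.map_comp]; congr 1; ext <;> simp [comp_fst', comp_snd']
        exact congrArg Prod.snd full
      app_η := by
        intro x
        have := congrArg Prod.snd (M.η.naturality ((f, 𝟙 x) : ((a,x) : A × X) ⟶ (b,x)))
        simp only [comp_snd'] at this
        dsimp [unhatM] at this ⊢
        simp at this
        exact this.symm
      app_μ := by
        intro x
        have key : eqToHom (kk M h (a,x)).symm ≫ M.map ((f, 𝟙 x) : ((a,x) : A × X) ⟶ (b,x))
            = ((𝟙 a, (M.map ((f, 𝟙 x) : ((a,x) : A × X) ⟶ (b,x))).2) :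
                ((a, (M.obj (a,x)).2) : A × X) ⟶ (a, (M.obj (b,x)).2))
              ≫ ((f, 𝟙 ((M.obj (b,x)).2)) : ((a, (M.obj (b,x)).2) : A × X) ⟶ (b, (M.obj (b,x)).2))
              ≫ eqToHom (kk M h (b,x)).symm := by
          ext
          · simp [comp_fst', prod_eqToHom_fst, mfst M h]
          · simp [comp_snd', prod_eqToHom_snd]
        have full : (M.map (eqToHom (kk M h (a,x)).symm) ≫ M.μ.app (a,x))
              ≫ M.map ((f, 𝟙 x) : ((a,x) : A × X) ⟶ (b,x))
            = (M.map ((𝟙 a, (M.map ((f, 𝟙 x) : ((a,x) : A × X) ⟶ (b,x))).2) :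
                  ((a, (M.obj (a,x)).2) : A × X) ⟶ (a, (M.obj (b,x)).2))
                ≫ M.map ((f, 𝟙 ((M.obj (b,x)).2)) :
                  ((a, (M.obj (b,x)).2) : A × X) ⟶ (b, (M.obj (b,x)).2)))
              ≫ M.map (eqToHom (kk M h (b,x)).symm) ≫ M.μ.app (b,x) := by
          rw [Category.assoc, ← show M.map (M.map ((f, 𝟙 x) : ((a,x) : A × X) ⟶ (b,x)))
                ≫ M.μ.app (b,x) = M.μ.app (a,x) ≫ M.map (f, 𝟙 x) from M.μ.naturality _,
            ← Category.assoc, ← M.map_comp, key]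
          simp only [M.map_comp, Category.assoc]
        exact congrArg Prod.snd full }
  map_id a := by
    ext x
    show (M.map (𝟙 ((a,x) : A × X))).2 = _
    rw [M.map_id]; rfl
  map_comp {a b c} f f' := by
    ext x
    have : M.map ((f ≫ f', 𝟙 x) : ((a,x) : A × X) ⟶ (c,x))
        = M.map ((f, 𝟙 x) : ((a,x) : A × X) ⟶ (b,x))
          ≫ M.map ((f', 𝟙 x) : ((b,x) : A × X) ⟶ (c,x)) := by
      rw [← M.map_comp]; congr 1; ext <;> simp [comp_fst', comp_snd']
    exact congrArg Prod.snd this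

end
end

/-- The endofunctor `T̂ : A × X ⥤ A × X`, `(A, X) ↦ (A, T_A(X))`, induced by a
parametrized monad `T : A ⥤ Monad X`. -/
def hatFunctor (T : A ⥤ Monad X) : A × X ⥤ A × X where
  obj p := (p.1, (T.obj p.1).obj p.2)
  map {p q} f := (f.1, (T.obj p.1).map f.2 ≫ (T.map f.1).app q.2)
  map_id p := by
    ext
    · rfl
    · simp [MonadHom.id_toNatTrans]
  map_comp {p q r} f g := by
    ext
    · rfl
    · dsimp
      simp only [Functor.map_comp, Category.assoc, MonadHom.comp_toNatTrans,
        NatTrans.comp_app]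
      rw [← NatTrans.naturality_assoc (T.map f.1).toNatTrans g.2]

/-- The monad `T̂` on `A × X` induced by a parametrized monad `T : A ⥤ Monad X`:
on objects `(A, X) ↦ (A, T_A(X))`, with unit components `(𝟙_A, η^{T_A}_X)` and
multiplication components `(𝟙_A, μ^{T_A}_X)`. -/
def hatMonad (T : A ⥤ Monad X) : Monad (A × X) where
  toFunctor := hatFunctor T
  η :=
    { app := fun p => (𝟙 p.1, (T.obj p.1).η.app p.2)
      naturality := by
        intro p q f
        ext
        · simp [hatFunctor]
        · dsimp [hatFunctor]
          rw [← NatTrans.naturality_assoc (T.obj p.1).η f.2 ((T.map f.1).app q.2)]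
          simp }
  μ :=
    { app := fun p => (𝟙 p.1, (T.obj p.1).μ.app p.2)
      naturality := by
        intro p q f
        ext
        · simp [hatFunctor]
        · dsimp [hatFunctor]
          simp only [Functor.map_comp, Category.assoc]
          rw [← NatTrans.naturality_assoc (T.obj p.1).μ f.2 ((T.map f.1).app q.2),
            MonadHom.app_μ (T.map f.1) q.2]
          simp }
  assoc p := by
    ext
    · simp [hatFunctor]
    · dsimp [hatFunctor]
      simp [Monad.assoc (T.obj p.1)]
  left_unit p := by
    ext
    · simp [hatFunctor]
    · dsimp [hatFunctor]
      simp
  right_unit p := by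
    ext
    · simp [hatFunctor]
    · dsimp [hatFunctor]
      simp

theorem monad_ext {C : Type*} [Category C] {M N : Monad C}
    (h1 : M.toFunctor = N.toFunctor)
    (h2 : ∀ x, M.η.app x = N.η.app x ≫ eqToHom (Functor.congr_obj h1 x).symm)
    (h3 : ∀ x, M.μ.app x = eqToHom (by rw [h1]) ≫ N.μ.app x ≫
      eqToHom (Functor.congr_obj h1 x).symm) : M = N := by
  obtain ⟨F, η, μ, _, _, _⟩ := M
  obtain ⟨G, η', μ', _, _, _⟩ := N
  dsimp at h1
  subst h1
  obtain rfl : η = η' := by ext x; simpa using h2 x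
  obtain rfl : μ = μ' := by ext x; simpa using h3 x
  rfl

theorem monadHom_eqToHom_app {C : Type*} [Category C] {M N : Monad C} (p : M = N) (x : C) :
    (eqToHom p).app x = eqToHom (by rw [p]) := by subst p; rfl

section
variable (M : Monad (A × X)) (h : M.toFunctor ⋙ CategoryTheory.Prod.fst A X = CategoryTheory.Prod.fst A X)
variable (hη : ∀ p : A × X, (M.η.app p).1 = eqToHom (Functor.congr_obj h p).symm)
variable (hμ : ∀ p : A × X, (M.μ.app p).1 = eqToHom (Functor.congr_obj h (M.obj p)))

theorem toFunctor_eq : M.toFunctor = hatFunctor (unhat M h hη hμ) := by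
  refine CategoryTheory.Functor.ext (fun p => kk M h p) ?_
  intro p q f
  have : M.map f = M.map (((𝟙 p.1, f.2) : ((p.1, p.2) : A × X) ⟶ (p.1, q.2))
      ≫ ((f.1, 𝟙 q.2) : ((p.1, q.2) : A × X) ⟶ (q.1, q.2))) := by
    congr 1; ext <;> simp [comp_fst', comp_snd']
  ext
  · simp [mfst M h, comp_fst', prod_eqToHom_fst, hatFunctor, unhat]
    erw [prod_eqToHom_fst, prod_eqToHom_fst]
  · simp only [comp_snd', prod_eqToHom_snd]
    rw [this, M.map_comp]
    simp [hatFunctor, unhat, unhatM, unhatF, comp_snd']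

theorem hatMonad_η_app' (T : A ⥤ Monad X) (p : A × X) :
    (hatMonad T).η.app p = (𝟙 p.1, (T.obj p.1).η.app p.2) := rfl

theorem hatMonad_μ_app' (T : A ⥤ Monad X) (p : A × X) :
    (hatMonad T).μ.app p = (𝟙 p.1, (T.obj p.1).μ.app p.2) := rfl

theorem unhat_obj_η (a : A) (x : X) :
    ((unhat M h hη hμ).obj a).η.app x = (M.η.app (a,x)).2 := rfl

theorem unhat_obj_μ (a : A) (x : X) :
    ((unhat M h hη hμ).obj a).μ.app x
      = (M.map (eqToHom (kk M h (a,x)).symm) ≫ M.μ.app (a,x)).2 := rfl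

theorem M_eq : M = hatMonad (unhat M h hη hμ) := by
  refine monad_ext (toFunctor_eq M h hη hμ) ?_ ?_
  · intro p
    dsimp only [hatMonad, hatFunctor, unhat, unhatM, unhatF]
    ext
    · simp [comp_fst', prod_eqToHom_fst, hη]
      erw [prod_eqToHom_fst]
    · simp [comp_snd', prod_eqToHom_snd]
      erw [prod_eqToHom_snd]
      simp
  · intro p
    dsimp only [hatMonad, hatFunctor, unhat, unhatM, unhatF]
    ext
    · simp [comp_fst', prod_eqToHom_fst, hμ]
      erw [prod_eqToHom_fst, prod_eqToHom_fst]
      simp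
    · simp [comp_snd', prod_eqToHom_snd, eqToHom_map]
      erw [prod_eqToHom_snd, prod_eqToHom_snd]
      simp

theorem Monad.eq_η_app {C : Type*} [Category C] {M N : Monad C} (e : M = N) (p : C) :
    M.η.app p = N.η.app p ≫ eqToHom (show N.obj p = M.obj p by rw [e]) := by
  subst e; simp

theorem Monad.eq_μ_app {C : Type*} [Category C] {M N : Monad C} (e : M = N) (p : C) :
    M.μ.app p = eqToHom (show M.obj (M.obj p) = N.obj (N.obj p) by rw [e])
      ≫ N.μ.app p ≫ eqToHom (show N.obj p = M.obj p by rw [e]) := by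
  subst e; simp

theorem eq_unhat (T : A ⥤ Monad X) (hT : M = hatMonad T) : T = unhat M h hη hμ := by
  have hF : M.toFunctor = hatFunctor T := congrArg Monad.toFunctor hT
  have hobj : ∀ (a : A) (x : X), (T.obj a).obj x = (M.obj (a,x)).2 := fun a x =>
    (congrArg Prod.snd (Functor.congr_obj hF (a,x))).symm
  have hmap : ∀ (a : A) {x y : X} (g : x ⟶ y),
      (T.obj a).map g = eqToHom (hobj a x) ≫ (M.map ((𝟙 a, g) : ((a,x) : A × X) ⟶ (a,y))).2
        ≫ eqToHom (hobj a y).symm := by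
    intro a x y g
    have := congrArg Prod.snd (Functor.congr_hom hF ((𝟙 a, g) : ((a,x) : A × X) ⟶ (a,y)))
    dsimp only [hatFunctor] at this
    rw [this]
    simp [comp_snd', prod_eqToHom_snd]
    erw [prod_eqToHom_snd, prod_eqToHom_snd]
    simp
  have hobjT : ∀ a, T.obj a = (unhat M h hη hμ).obj a := by
    intro a
    have hFa : (T.obj a).toFunctor = ((unhat M h hη hμ).obj a).toFunctor := by
      refine CategoryTheory.Functor.ext (hobj a) ?_
      intro x y g
      exact hmap a g
    refine monad_ext hFa ?_ ?_
    · intro x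
      have := congrArg Prod.snd (Monad.eq_η_app hT (a,x))
      dsimp only [hatMonad, hatFunctor] at this
      simp only [comp_snd', prod_eqToHom_snd] at this
      dsimp only [unhat, unhatM, unhatF]
      rw [this]
      simp
      erw [prod_eqToHom_snd]
      simp
      erw [eqToHom_trans]
      simp
    · intro x
      have := congrArg Prod.snd (Monad.eq_μ_app hT (a,x))
      dsimp only [hatMonad, hatFunctor] at this
      simp only [comp_snd', prod_eqToHom_snd] at this
      dsimp only [unhat, unhatM, unhatF]
      simp only [comp_snd', eqToHom_map, prod_eqToHom_snd, this]
      simp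
      erw [prod_eqToHom_snd, prod_eqToHom_snd]
      simp
      erw [eqToHom_trans_assoc, eqToHom_trans]
      simp
  refine CategoryTheory.Functor.ext hobjT ?_
  intro a b f
  ext x
  have := congrArg Prod.snd (Functor.congr_hom hF ((f, 𝟙 x) : ((a,x) : A × X) ⟶ (b,x)))
  dsimp only [hatFunctor] at this
  simp only [comp_snd', prod_eqToHom_snd] at this
  simp only [MonadHom.comp_toNatTrans, NatTrans.comp_app, monadHom_eqToHom_app]
  dsimp only [unhat, unhatM, unhatF]
  rw [this]
  simp
  erw [prod_eqToHom_snd, prod_eqToHom_snd]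
  simp
  erw [eqToHom_trans_assoc, eqToHom_trans]
  simp
end

/-- For a parametrized monad `T : A ⥤ Monad X`, the functor
`T̂ : A × X ⥤ A × X`, `(A, X) ↦ (A, T_A(X))`, carries a monad structure whose unit has
components `(𝟙_A, η^{T_A}_X)` and whose multiplication has components `(𝟙_A, μ^{T_A}_X)`;
the composite of `T̂` with the first projection equals the first projection, and the unit
and multiplication of `T̂` project to identities.  Conversely, every monad `M` on `A × X`
satisfying these conditions equals `T̂` for a unique functor `T : A ⥤ Monad X`. -/
theorem hatMonad_spec_and_unique :
    (∀ (T : A ⥤ Monad X),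
      (∀ (a : A) (x : X),
          (hatMonad T).η.app (a, x) = (𝟙 a, (T.obj a).η.app x)) ∧
      (∀ (a : A) (x : X),
          (hatMonad T).μ.app (a, x) = (𝟙 a, (T.obj a).μ.app x)) ∧
      ((hatMonad T).toFunctor ⋙ CategoryTheory.Prod.fst A X = CategoryTheory.Prod.fst A X) ∧
      (∀ p : A × X, ((hatMonad T).η.app p).1 = 𝟙 p.1) ∧
      (∀ p : A × X, ((hatMonad T).μ.app p).1 = 𝟙 p.1)) ∧
    (∀ (M : Monad (A × X))
      (h : M.toFunctor ⋙ CategoryTheory.Prod.fst A X = CategoryTheory.Prod.fst A X),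
      (∀ p : A × X, (M.η.app p).1 = eqToHom (Functor.congr_obj h p).symm) →
      (∀ p : A × X, (M.μ.app p).1 = eqToHom (Functor.congr_obj h (M.obj p))) →
      ∃! T : A ⥤ Monad X, M = hatMonad T) := by
  constructor
  · intro T
    exact ⟨fun a x => rfl, fun a x => rfl, rfl, fun p => rfl, fun p => rfl⟩
  · intro M h hη hμ
    exact ⟨unhat M h hη hμ, M_eq M h hη hμ, fun T' hT' => eq_unhat M h hη hμ T' hT'⟩
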